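/- arXiv:2206.05890 — 3 statements merged into one kernel-verified Lean document; each statement's English description precedes it below -/
import Mathlib

section
/- Let q be a real number with 0 < q < 1, let k ≥ 1 and n be natural numbers, and let θ_1, …, θ_k be positive real numbers. Then the q-multinomial distribution of the first kind with parameters n, (θ_1,…,θ_k), q is a probability distribution: Σ C_q(n; y_1,…,y_k) · ∏_{j=1}^{k} [ θ_j^{y_j} · q^{y_j(y_j−1)/2} / ∏_{i=1}^{n − s_{j−1}} (1 + θ_j q^{i−1}) ] = 1, where the sum is over all tuples (y_1,…,y_k) of natural numbers with y_1 + ⋯ + y_k ≤ n, and s_j = y_1 + ⋯ + y_j with s_0 = 0. -/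
noncomputable def qNum (q : ℝ) (m : ℤ) : ℝ := (1 - q ^ m) / (1 - q)

noncomputable def qFactorial (q : ℝ) (n : ℕ) : ℝ :=
  ∏ i ∈ Finset.range n, qNum q ((i : ℤ) + 1)

noncomputable def qFacOrd (q : ℝ) (x : ℤ) (r : ℕ) : ℝ :=
  ∏ i ∈ Finset.range r, qNum q (x - (i : ℤ))

noncomputable def qMultinomial (q : ℝ) (x : ℤ) {k : ℕ} (r : Fin k → ℕ) : ℝ :=
  qFacOrd q x (∑ j, r j) / ∏ j, qFactorial q (r j)

lemma qNum_natCast (q : ℝ) (m : ℕ) : qNum q (m : ℤ) = (1 - q ^ m) / (1 - q) := by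
  rw [qNum, zpow_natCast]

lemma qNum_pos {q : ℝ} (hq0 : 0 < q) (hq1 : q < 1) {m : ℕ} (hm : 0 < m) :
    0 < qNum q (m : ℤ) := by
  rw [qNum_natCast]
  have h1 : q ^ m < 1 := pow_lt_one₀ hq0.le hq1 hm.ne'
  apply div_pos <;> linarith

lemma qFactorial_pos {q : ℝ} (hq0 : 0 < q) (hq1 : q < 1) (n : ℕ) :
    0 < qFactorial q n := by
  rw [qFactorial]
  apply Finset.prod_pos
  intro i _
  have := qNum_pos hq0 hq1 (m := i + 1) (Nat.succ_pos i)
  push_cast at this ⊢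
  exact this

lemma qFacOrd_eq_zero {q : ℝ} {n s : ℕ} (h : n < s) : qFacOrd q (n : ℤ) s = 0 := by
  rw [qFacOrd]
  apply Finset.prod_eq_zero (Finset.mem_range.mpr h)
  simp [qNum]

lemma qFacOrd_add (q : ℝ) {n a : ℕ} (s : ℕ) (h : a ≤ n) :
    qFacOrd q (n : ℤ) (a + s) = qFacOrd q (n : ℤ) a * qFacOrd q ((n - a : ℕ) : ℤ) s := by
  rw [qFacOrd, qFacOrd, qFacOrd, Finset.prod_range_add]
  congr 1
  apply Finset.prod_congr rfl
  intro i _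
  congr 1
  push_cast [Nat.cast_sub h]
  ring

noncomputable def qbinom (q : ℝ) (n a : ℕ) : ℝ := qFacOrd q (n : ℤ) a / qFactorial q a

lemma qbinom_zero (q : ℝ) (n : ℕ) : qbinom q n 0 = 1 := by
  simp [qbinom, qFacOrd, qFactorial]

lemma qbinom_pascal {q : ℝ} (hq0 : 0 < q) (hq1 : q < 1) {n a : ℕ} (h : a ≤ n) :
    qbinom q (n + 1) (a + 1) = qbinom q n (a + 1) + q ^ (n - a) * qbinom q n a := by
  have hfo1 : qFacOrd q ((n:ℕ) + 1 : ℤ) (a + 1) = qFacOrd q (n : ℤ) a * qNum q ((n:ℤ) + 1) := by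
    simp only [qFacOrd, Finset.prod_range_succ', Nat.cast_zero, sub_zero, Nat.cast_add,
      Nat.cast_one]
    congr 1
    apply Finset.prod_congr rfl
    intro i _
    congr 1
    ring
  have hfo2 : qFacOrd q (n : ℤ) (a + 1) = qFacOrd q (n : ℤ) a * qNum q ((n:ℤ) - a) := by
    rw [qFacOrd, Finset.prod_range_succ, qFacOrd]
  have hfa : qFactorial q (a + 1) = qFactorial q a * qNum q ((a:ℤ) + 1) := by
    rw [qFactorial, Finset.prod_range_succ, qFactorial]
  have hq : (1:ℝ) - q ≠ 0 := by linarith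
  have hna : ((n:ℤ) - a) = ((n - a : ℕ) : ℤ) := by push_cast [Nat.cast_sub h]; ring
  have key : qNum q ((n:ℤ) + 1) = qNum q ((n:ℤ) - a) + q ^ (n - a) * qNum q ((a:ℤ) + 1) := by
    rw [hna]
    have h1 : ((n:ℤ) + 1) = ((n + 1 : ℕ) : ℤ) := by push_cast; ring
    have h2 : ((a:ℤ) + 1) = ((a + 1 : ℕ) : ℤ) := by push_cast; ring
    rw [h1, h2, qNum_natCast, qNum_natCast, qNum_natCast, ← mul_div_assoc,
      ← add_div]
    have : q ^ (n - a) * q ^ (a + 1) = q ^ (n + 1) := by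
      rw [← pow_add]; congr 1; omega
    congr 1
    nlinarith [this]
  have hfapos := (qFactorial_pos hq0 hq1 a).ne'
  have hnum : qNum q ((a:ℤ) + 1) ≠ 0 := by
    have := qNum_pos hq0 hq1 (m := a + 1) (Nat.succ_pos a)
    push_cast at this; linarith
  rw [qbinom, qbinom, qbinom]
  push_cast
  rw [hfo1, hfo2, hfa, key]
  field_simp

example (n a : ℕ) (h : a ≤ n) : (a+1)*a/2 = a*(a-1)/2 + a := by
  rcases a with _ | b
  · simp
  · have h1 : (b+1+1)*(b+1) = (b+1)*b + 2*(b+1) := by ring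
    have h2 : 2 ∣ (b+1)*b := by
      rcases Nat.even_or_odd b with he | ho
      · exact Dvd.dvd.mul_left he.two_dvd _
      · exact Dvd.dvd.mul_right (ho.add_one).two_dvd _
    simp only [Nat.add_sub_cancel]
    omega

lemma tri_succ (a : ℕ) : (a+1)*((a+1)-1)/2 = a*(a-1)/2 + a := by
  simp only [Nat.add_sub_cancel]
  rcases a with _ | b
  · simp
  · have h1 : (b+1+1)*(b+1) = (b+1)*b + 2*(b+1) := by ring
    have h2 : 2 ∣ (b+1)*b := by
      rcases Nat.even_or_odd b with he | ho
      · exact Dvd.dvd.mul_left he.two_dvd _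
      · exact Dvd.dvd.mul_right ho.add_one.two_dvd _
    simp only [Nat.add_sub_cancel]
    omega

lemma qbinom_top_zero (q : ℝ) (n : ℕ) : qbinom q n (n + 1) = 0 := by
  rw [qbinom, qFacOrd_eq_zero (Nat.lt_succ_self n), zero_div]

lemma qbinom_theorem {q : ℝ} (hq0 : 0 < q) (hq1 : q < 1) (t : ℝ) (n : ℕ) :
    ∏ i ∈ Finset.range n, (1 + t * q ^ i)
      = ∑ a ∈ Finset.range (n + 1), qbinom q n a * (q ^ (a * (a - 1) / 2) * t ^ a) := by
  induction n with
  | zero => simp [qbinom_zero]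
  | succ n ih =>
    set S := ∑ a ∈ Finset.range (n + 1), qbinom q n a * (q ^ (a * (a - 1) / 2) * t ^ a) with hS
    have hA : (∑ a ∈ Finset.range (n + 1),
        qbinom q n (a+1) * (q ^ ((a+1) * ((a+1) - 1) / 2) * t ^ (a+1))) = S - 1 := by
      have h1 := Finset.sum_range_succ' (fun a => qbinom q n a * (q ^ (a * (a - 1) / 2) * t ^ a))
        (n + 1)
      have h2 := Finset.sum_range_succ (fun a => qbinom q n a * (q ^ (a * (a - 1) / 2) * t ^ a))
        (n + 1)
      simp only [qbinom_zero, qbinom_top_zero, zero_mul, add_zero, Nat.zero_sub,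
        Nat.zero_mul, pow_zero, mul_one, one_mul, Nat.mul_zero, Nat.zero_div] at h1 h2
      rw [← hS] at h2
      rw [h2] at h1
      linarith
    have hsum : (∑ a ∈ Finset.range (n + 1),
          qbinom q (n+1) (a+1) * (q ^ ((a+1) * ((a+1) - 1) / 2) * t ^ (a+1)))
        = ∑ a ∈ Finset.range (n + 1),
          (qbinom q n (a+1) * (q ^ ((a+1) * ((a+1) - 1) / 2) * t ^ (a+1))
            + qbinom q n a * (q ^ (a * (a - 1) / 2) * t ^ a) * (q ^ n * t)) := by
      apply Finset.sum_congr rfl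
      intro a ha
      have ha' : a ≤ n := Nat.lt_succ_iff.mp (Finset.mem_range.mp ha)
      rw [qbinom_pascal hq0 hq1 ha', add_mul]
      congr 1
      rw [tri_succ, pow_add, pow_succ]
      have hp : q ^ (n - a) * q ^ a = q ^ n := by rw [← pow_add]; congr 1; omega
      rw [← hp]
      ring
    rw [Finset.prod_range_succ, ih,
      Finset.sum_range_succ' (fun a => qbinom q (n+1) a * (q ^ (a * (a - 1) / 2) * t ^ a)) (n + 1),
      hsum, Finset.sum_add_distrib, ← Finset.sum_mul, hA]
    simp only [qbinom_zero, Nat.zero_mul, Nat.zero_div, pow_zero, mul_one, one_mul]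
    ring

lemma qMultinomial_zero {q : ℝ} {n k : ℕ} {r : Fin k → ℕ} (h : n < ∑ j, r j) :
    qMultinomial q (n : ℤ) r = 0 := by
  rw [qMultinomial, qFacOrd_eq_zero h, zero_div]

lemma sum_filter_lt_succ {k : ℕ} (a : ℕ) (y' : Fin k → ℕ) (j : Fin k) :
    ∑ i' ∈ Finset.univ.filter (fun i' => i' < j.succ), (Fin.cons a y' : Fin (k+1) → ℕ) i'
      = a + ∑ i' ∈ Finset.univ.filter (fun i' => i' < j), y' i' := by
  rw [Finset.sum_filter, Finset.sum_filter, Fin.sum_univ_succ]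
  simp [Fin.succ_lt_succ_iff, Fin.succ_pos]

lemma qMultinomial_cons {q : ℝ} {k n a : ℕ} (ha : a ≤ n) (y' : Fin k → ℕ) :
    qMultinomial q (n : ℤ) (Fin.cons a y')
      = qbinom q n a * qMultinomial q ((n - a : ℕ) : ℤ) y' := by
  rw [qMultinomial, qMultinomial, qbinom, Fin.sum_cons, qFacOrd_add q _ ha]
  have h1 : ∏ j : Fin (k+1), qFactorial q ((Fin.cons a y' : Fin (k+1) → ℕ) j)
      = qFactorial q a * ∏ j : Fin k, qFactorial q (y' j) := by
    rw [Fin.prod_univ_succ]; simp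
  rw [h1, div_mul_div_comm]

lemma aux_dist {q : ℝ} (hq0 : 0 < q) (hq1 : q < 1) :
    ∀ (k : ℕ) (n : ℕ) (θ : Fin k → ℝ), (∀ j, 0 < θ j) →
    ∑ y ∈ Fintype.piFinset (fun _ : Fin k => Finset.range (n + 1)),
      qMultinomial q (n : ℤ) y *
        ∏ j : Fin k,
          θ j ^ (y j) * q ^ (y j * (y j - 1) / 2) /
            ∏ i ∈ Finset.range (n - ∑ i' ∈ Finset.univ.filter (fun i' => i' < j), y i'),
              (1 + θ j * q ^ i) = 1 := by
  intro k
  induction k with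
  | zero =>
    intro n θ hθ
    have hset : Fintype.piFinset (fun _ : Fin 0 => Finset.range (n + 1)) = {Fin.elim0} := by
      ext y
      simp only [Finset.mem_singleton, Fintype.mem_piFinset]
      constructor
      · intro _; exact Subsingleton.elim _ _
      · intro _ i; exact i.elim0
    rw [hset, Finset.sum_singleton]
    simp [qMultinomial, qFacOrd, qFactorial]
  | succ k ih =>
    intro n θ hθ
    -- reindex via cons
    rw [Finset.sum_nbij' (i := fun y : Fin (k+1) → ℕ => ((y 0, Fin.tail y) :
          ℕ × (Fin k → ℕ)))
        (j := fun p : ℕ × (Fin k → ℕ) => Fin.cons p.1 p.2)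
        (t := Finset.range (n+1) ×ˢ Fintype.piFinset (fun _ : Fin k => Finset.range (n + 1)))
        (g := fun p => qMultinomial q (n : ℤ) (Fin.cons p.1 p.2) *
          ∏ j : Fin (k+1),
            θ j ^ ((Fin.cons p.1 p.2 : Fin (k+1) → ℕ) j) *
              q ^ ((Fin.cons p.1 p.2 : Fin (k+1) → ℕ) j *
                ((Fin.cons p.1 p.2 : Fin (k+1) → ℕ) j - 1) / 2) /
              ∏ i ∈ Finset.range
                  (n - ∑ i' ∈ Finset.univ.filter (fun i' => i' < j),
                    (Fin.cons p.1 p.2 : Fin (k+1) → ℕ) i'),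
                (1 + θ j * q ^ i))]
    rotate_left
    · intro y hy
      simp only [Fintype.mem_piFinset, Finset.mem_range] at hy
      simp only [Finset.mem_product, Finset.mem_range, Fintype.mem_piFinset]
      exact ⟨hy 0, fun i => hy i.succ⟩
    · intro p hp
      simp only [Finset.mem_product, Finset.mem_range, Fintype.mem_piFinset] at hp
      simp only [Fintype.mem_piFinset]
      intro i
      refine Fin.cases ?_ ?_ i
      · simpa using hp.1
      · intro i'; simpa using hp.2 i'
    · intro y _
      exact Fin.cons_self_tail y
    · intro p _
      simp [Fin.tail_cons]
    · intro y _
      rw [Fin.cons_self_tail y]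
    -- now sum over product
    rw [Finset.sum_product]
    have hP : (0:ℝ) < ∏ i ∈ Finset.range n, (1 + θ 0 * q ^ i) := by
      apply Finset.prod_pos
      intro i _
      have := hθ 0
      positivity
    have key : ∀ a ∈ Finset.range (n+1),
        (∑ y' ∈ Fintype.piFinset (fun _ : Fin k => Finset.range (n + 1)),
          qMultinomial q (n : ℤ) (Fin.cons a y') *
            ∏ j : Fin (k+1),
              θ j ^ ((Fin.cons a y' : Fin (k+1) → ℕ) j) *
                q ^ ((Fin.cons a y' : Fin (k+1) → ℕ) j *
                  ((Fin.cons a y' : Fin (k+1) → ℕ) j - 1) / 2) /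
                ∏ i ∈ Finset.range
                    (n - ∑ i' ∈ Finset.univ.filter (fun i' => i' < j),
                      (Fin.cons a y' : Fin (k+1) → ℕ) i'),
                  (1 + θ j * q ^ i))
        = qbinom q n a * (θ 0 ^ a * q ^ (a * (a - 1) / 2) /
            ∏ i ∈ Finset.range n, (1 + θ 0 * q ^ i)) := by
      intro a ha
      have ha' : a ≤ n := Nat.lt_succ_iff.mp (Finset.mem_range.mp ha)
      -- restrict the sum
      rw [← Finset.sum_subset
        (Fintype.piFinset_subset _ _
          (fun _ => Finset.range_subset_range.mpr (by omega : n - a + 1 ≤ n + 1)))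
        (by
          intro y' hy' hy2
          simp only [Fintype.mem_piFinset, Finset.mem_range, not_forall, not_lt] at hy2
          obtain ⟨j, hj⟩ := hy2
          have hbig : n < ∑ i : Fin (k+1), (Fin.cons a y' : Fin (k+1) → ℕ) i := by
            rw [Fin.sum_cons]
            have : y' j ≤ ∑ i, y' i :=
              Finset.single_le_sum (fun i _ => Nat.zero_le (y' i)) (Finset.mem_univ j)
            omega
          rw [qMultinomial_zero hbig, zero_mul])]
      -- factor each term
      rw [Finset.sum_congr rfl (fun y' hy' => ?_), ← Finset.mul_sum,
        ih (n - a) (fun j => θ j.succ) (fun j => hθ j.succ), mul_one]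
      · rw [qMultinomial_cons ha', Fin.prod_univ_succ]
        have h0 : (Finset.univ.filter (fun i' : Fin (k+1) => i' < 0)) = ∅ := by
          apply Finset.filter_false_of_mem
          intro i _
          exact Fin.not_lt_zero i
        simp only [Fin.cons_zero, Fin.cons_succ, h0, Finset.sum_empty, Nat.sub_zero,
          sum_filter_lt_succ, Nat.sub_add_eq]
        ring
    rw [Finset.sum_congr rfl key]
    -- q-binomial theorem
    have h1 : ∀ a ∈ Finset.range (n+1),
        qbinom q n a * (θ 0 ^ a * q ^ (a * (a - 1) / 2) /
            ∏ i ∈ Finset.range n, (1 + θ 0 * q ^ i))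
        = qbinom q n a * (q ^ (a * (a - 1) / 2) * θ 0 ^ a) *
            (∏ i ∈ Finset.range n, (1 + θ 0 * q ^ i))⁻¹ := by
      intro a _
      rw [div_eq_mul_inv]
      ring
    rw [Finset.sum_congr rfl h1, ← Finset.sum_mul, ← qbinom_theorem hq0 hq1 (θ 0) n,
      mul_inv_cancel₀ hP.ne']

/-- The q-multinomial distribution of the first kind is a probability distribution:
    Σ_{y, Σy_j ≤ n} C_q(n; y) ∏_j θ_j^(y_j) q^(y_j(y_j−1)/2) / ∏_{i=1}^{n−s_{j−1}} (1 + θ_j q^(i−1)) = 1. -/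
theorem qMultinomial_dist_first_kind (q : ℝ) (hq0 : 0 < q) (hq1 : q < 1)
    (k n : ℕ) (hk : 1 ≤ k) (θ : Fin k → ℝ) (hθ : ∀ j, 0 < θ j) :
    ∑ y ∈ Finset.univ.filter (fun y : Fin k → Fin (n + 1) => ∑ j, (y j : ℕ) ≤ n),
      qMultinomial q (n : ℤ) (fun j => (y j : ℕ)) *
        ∏ j : Fin k,
          θ j ^ (y j : ℕ) * q ^ ((y j : ℕ) * ((y j : ℕ) - 1) / 2) /
            ∏ i ∈ Finset.range
                (n - ∑ i' ∈ Finset.univ.filter (fun i' => i' < j), (y i' : ℕ)),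
              (1 + θ j * q ^ i) = 1 := by

  rw [Finset.sum_subset (Finset.filter_subset _ Finset.univ)
    (by
      intro y _ hy
      simp only [Finset.mem_filter, Finset.mem_univ, true_and, not_le] at hy
      rw [qMultinomial_zero hy, zero_mul])]
  open Fin.NatCast in
  rw [Finset.sum_nbij' (i := fun y : Fin k → Fin (n+1) => fun j => ((y j : ℕ)))
      (j := fun z : Fin k → ℕ => fun jj => ((z jj : ℕ) : Fin (n+1)))
      (t := Fintype.piFinset (fun _ : Fin k => Finset.range (n + 1)))
      (g := fun z : Fin k → ℕ => qMultinomial q (n : ℤ) z *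
        ∏ j : Fin k,
          θ j ^ (z j) * q ^ (z j * (z j - 1) / 2) /
            ∏ i ∈ Finset.range (n - ∑ i' ∈ Finset.univ.filter (fun i' => i' < j), z i'),
              (1 + θ j * q ^ i))]
  rotate_left
  · intro y _
    simp only [Fintype.mem_piFinset, Finset.mem_range]
    exact fun j => (y j).isLt
  · intro z _
    exact Finset.mem_univ _
  · intro y _
    funext jj
    exact Fin.cast_val_eq_self (y jj)
  · intro z hz
    simp only [Fintype.mem_piFinset, Finset.mem_range] at hz
    funext jj
    exact Fin.val_cast_of_lt (hz jj)
  · intro y _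
    rfl
  exact aux_dist hq0 hq1 k n θ hθ
end

section
/- Let q be a real number with 0 < q < 1, let k ≥ 1 be a natural number, let θ_1, …, θ_k be positive real numbers, and let (y_1,…,y_k) be a fixed tuple of natural numbers with s_j = y_1 + ⋯ + y_j (s_0 = 0). Then the probability mass of the q-multinomial distribution of the first kind converges, as n → ∞, to that of the multiple q-Heine distribution: lim_{n → ∞} C_q(n; y_1,…,y_k) · ∏_{j=1}^{k} [ θ_j^{y_j} · q^{y_j(y_j−1)/2} / ∏_{i=1}^{n − s_{j−1}} (1 + θ_j q^{i−1}) ] = ∏_{j=1}^{k} [ θ_j^{y_j} · q^{y_j(y_j−1)/2} / ( (1−q)^{y_j} · [y_j]_q! · ∏_{i=0}^{∞} (1 + θ_j q^{i}) ) ], where ∏_{i=0}^{∞} (1 + θ_j q^i) denotes the convergent infinite product. -/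
open Filter Finset Real

lemma multipliable_one_add_geom (q θ : ℝ) (hq0 : 0 < q) (hq1 : q < 1) (hθ : 0 < θ) :
    Multipliable (fun i : ℕ => 1 + θ * q ^ i) := by
  have hpos : ∀ i : ℕ, 0 < 1 + θ * q ^ i := fun i => by positivity
  have hs : Summable (fun i : ℕ => Real.log (1 + θ * q ^ i)) := by
    apply Summable.of_nonneg_of_le (fun i => Real.log_nonneg (by nlinarith [pow_pos hq0 i]))
      (fun i => ?_) (((summable_geometric_of_lt_one hq0.le hq1)).mul_left θ)
    have := Real.log_le_sub_one_of_pos (hpos i)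
    linarith
  have := Real.multipliable_of_summable_log hpos hs
  exact this

/-- The pmf of the q-multinomial distribution of the first kind converges, as n → ∞,
    to that of the multiple q-Heine distribution. -/
theorem qMultinomial_first_kind_tendsto_heine (q : ℝ) (hq0 : 0 < q) (hq1 : q < 1)
    (k : ℕ) (hk : 1 ≤ k) (θ : Fin k → ℝ) (hθ : ∀ j, 0 < θ j) (y : Fin k → ℕ) :
    Filter.Tendsto
      (fun n : ℕ =>
        qMultinomial q (n : ℤ) y *
          ∏ j : Fin k,
            θ j ^ y j * q ^ (y j * (y j - 1) / 2) /
              ∏ i ∈ Finset.range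
                  (n - ∑ i' ∈ Finset.univ.filter (fun i' => i' < j), y i'),
                (1 + θ j * q ^ i))
      Filter.atTop
      (nhds (∏ j : Fin k,
        θ j ^ y j * q ^ (y j * (y j - 1) / 2) /
          ((1 - q) ^ y j * qFactorial q (y j) * ∏' i : ℕ, (1 + θ j * q ^ i)))) := by
  have hq1' : (1 : ℝ) - q ≠ 0 := by linarith
  set S : ℕ := ∑ j, y j with hS
  set D : ℝ := ∏ j, qFactorial q (y j) with hD
  set c : Fin k → ℝ := fun j => θ j ^ y j * q ^ (y j * (y j - 1) / 2) with hc
  set T : Fin k → ℝ := fun j => ∏' i : ℕ, (1 + θ j * q ^ i) with hT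
  set s : Fin k → ℕ := fun j => ∑ i' ∈ Finset.univ.filter (fun i' => i' < j), y i' with hs
  -- limit of qFacOrd
  have h1 : Tendsto (fun n : ℕ => qFacOrd q (n : ℤ) S) atTop (nhds ((1 - q)⁻¹ ^ S)) := by
    have : ((1 - q)⁻¹ ^ S : ℝ) = ∏ _i ∈ Finset.range S, (1 - q)⁻¹ := by
      simp
    rw [this]
    unfold qFacOrd qNum
    apply tendsto_finset_prod
    intro i _
    have hz : Tendsto (fun n : ℕ => q ^ ((n : ℤ) - (i : ℤ))) atTop (nhds 0) := by
      have : (fun n : ℕ => q ^ ((n : ℤ) - (i : ℤ))) = fun n : ℕ => q ^ n / q ^ (i : ℤ) := by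
        funext n
        rw [zpow_sub₀ hq0.ne', zpow_natCast]
      rw [this]
      simpa using (tendsto_pow_atTop_nhds_zero_of_lt_one hq0.le hq1).div_const (q ^ (i : ℤ))
    have h := (((tendsto_const_nhds :
        Tendsto (fun _ : ℕ => (1 : ℝ)) atTop (nhds 1)).sub hz).div_const (1 - q))
    simpa using h
  -- multipliability and limit of partial products
  have hmul : ∀ j : Fin k, Multipliable (fun i : ℕ => 1 + θ j * q ^ i) :=
    fun j => multipliable_one_add_geom q (θ j) hq0 hq1 (hθ j)
  have h2 : ∀ j : Fin k,
      Tendsto (fun m : ℕ => ∏ i ∈ Finset.range m, (1 + θ j * q ^ i)) atTop (nhds (T j)) :=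
    fun j => (hmul j).hasProd.tendsto_prod_nat
  have hTpos : ∀ j : Fin k, (1 : ℝ) ≤ T j := by
    intro j
    apply ge_of_tendsto' (h2 j)
    intro m
    calc (1:ℝ) = ∏ _i ∈ Finset.range m, (1:ℝ) := by simp
    _ ≤ ∏ i ∈ Finset.range m, (1 + θ j * q ^ i) := by
        apply Finset.prod_le_prod (fun i _ => zero_le_one)
        intro i _
        nlinarith [pow_pos hq0 i, (hθ j).le]
  have h2' : ∀ j : Fin k,
      Tendsto (fun n : ℕ => ∏ i ∈ Finset.range (n - s j), (1 + θ j * q ^ i)) atTop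
        (nhds (T j)) :=
    fun j => (h2 j).comp (tendsto_sub_atTop_nat (s j))
  -- combined limit
  have key : Tendsto
      (fun n : ℕ => qFacOrd q (n : ℤ) S / D *
        ∏ j : Fin k, c j / ∏ i ∈ Finset.range (n - s j), (1 + θ j * q ^ i))
      atTop (nhds ((1 - q)⁻¹ ^ S / D * ∏ j : Fin k, c j / T j)) := by
    refine (h1.div_const D).mul (tendsto_finset_prod _ fun j _ => ?_)
    exact tendsto_const_nhds.div (h2' j) (by linarith [hTpos j])
  have hval : (1 - q)⁻¹ ^ S / D * ∏ j : Fin k, c j / T j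
      = ∏ j : Fin k, c j / ((1 - q) ^ y j * qFactorial q (y j) * T j) := by
    rw [hS, hD, div_eq_mul_inv, ← Finset.prod_inv_distrib, ← Finset.prod_pow_eq_pow_sum,
      ← Finset.prod_mul_distrib, ← Finset.prod_mul_distrib]
    refine Finset.prod_congr rfl fun j _ => ?_
    rw [div_eq_mul_inv, div_eq_mul_inv, mul_inv, mul_inv, inv_pow]
    ring
  rw [hval] at key
  exact key
end

section
/- Let q be a real number with 0 < q < 1, let k ≥ 1 be a natural number, let θ_1, …, θ_k be real numbers with 0 < θ_j < 1, and let (x_1,…,x_k) be a fixed tuple of natural numbers with s_j = x_1 + ⋯ + x_j. Then the probability mass of the q-multinomial distribution of the second kind converges, as n → ∞, to that of the multiple q-Euler distribution: lim_{n → ∞} C_q(n; x_1,…,x_k) · ∏_{j=1}^{k} [ θ_j^{x_j} · ∏_{i=1}^{n − s_j} (1 − θ_j q^{i−1}) ] = ∏_{j=1}^{k} [ θ_j^{x_j} · ∏_{i=0}^{∞} (1 − θ_j q^{i}) / ( (1−q)^{x_j} · [x_j]_q! ) ], where ∏_{i=0}^{∞} (1 − θ_j q^i) denotes the convergent infinite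 product. -/
set_option maxHeartbeats 1000000

lemma aux_pos (q θ : ℝ) (hq0 : 0 < q) (hq1 : q < 1) (hθ0 : 0 < θ) (hθ1 : θ < 1)
    (i : ℕ) : 0 < 1 - θ * q ^ i := by
  have h1 : q ^ i ≤ 1 := pow_le_one₀ hq0.le hq1.le
  have h2 : θ * q ^ i ≤ θ * 1 := by
    exact mul_le_mul_of_nonneg_left h1 hθ0.le
  nlinarith

lemma aux_mult (q θ : ℝ) (hq0 : 0 < q) (hq1 : q < 1) (hθ0 : 0 < θ) (hθ1 : θ < 1) :
    Multipliable (fun i : ℕ => 1 - θ * q ^ i) := by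
  have hpos := aux_pos q θ hq0 hq1 hθ0 hθ1
  have hsum : Summable fun n : ℕ => Real.log (1 - θ * q ^ n) := by
    apply Summable.of_abs
    refine Summable.of_nonneg_of_le (fun n => abs_nonneg _) (fun n => ?_)
      ((summable_geometric_of_lt_one hq0.le hq1).mul_left (θ / (1 - θ)))
    · 
      have hle : 1 - θ * q ^ n ≤ 1 := by nlinarith [pow_pos hq0 n]
      have hlog : Real.log (1 - θ * q ^ n) ≤ 0 :=
        Real.log_nonpos (hpos n).le hle
      rw [abs_of_nonpos hlog]
      have h2 : Real.log ((1 - θ * q ^ n)⁻¹) ≤ (1 - θ * q ^ n)⁻¹ - 1 :=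
        Real.log_le_sub_one_of_pos (inv_pos.mpr (hpos n))
      rw [Real.log_inv] at h2
      have h3 : (1 - θ * q ^ n)⁻¹ - 1 = θ * q ^ n / (1 - θ * q ^ n) := by
        rw [inv_eq_one_div, div_sub_one (hpos n).ne']
        congr 1
        ring
      have h4 : θ * q ^ n / (1 - θ * q ^ n) ≤ θ * q ^ n / (1 - θ) := by
        apply div_le_div_of_nonneg_left (by positivity) (by linarith)
        have : θ * q ^ n ≤ θ := by
          nlinarith [pow_le_one₀ hq0.le hq1.le (n := n), pow_pos hq0 n]
        linarith
      calc -Real.log (1 - θ * q ^ n) ≤ θ * q ^ n / (1 - θ * q ^ n) := by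
            rw [← h3]; linarith
        _ ≤ θ * q ^ n / (1 - θ) := h4
        _ = θ / (1 - θ) * q ^ n := by ring
  exact Real.multipliable_of_summable_log hpos hsum

/-- The pmf of the q-multinomial distribution of the second kind converges, as n → ∞,
    to that of the multiple q-Euler distribution. -/
theorem qMultinomial_second_kind_tendsto_euler (q : ℝ) (hq0 : 0 < q) (hq1 : q < 1)
    (k : ℕ) (hk : 1 ≤ k) (θ : Fin k → ℝ) (hθ0 : ∀ j, 0 < θ j) (hθ1 : ∀ j, θ j < 1)
    (x : Fin k → ℕ) :
    Filter.Tendsto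
      (fun n : ℕ =>
        qMultinomial q (n : ℤ) x *
          ∏ j : Fin k,
            θ j ^ x j *
              ∏ i ∈ Finset.range
                  (n - ∑ i' ∈ Finset.univ.filter (fun i' => i' ≤ j), x i'),
                (1 - θ j * q ^ i))
      Filter.atTop
      (nhds (∏ j : Fin k,
        θ j ^ x j * (∏' i : ℕ, (1 - θ j * q ^ i)) /
          ((1 - q) ^ x j * qFactorial q (x j)))) := by
  have hq1' : (1 : ℝ) - q ≠ 0 := by linarith
  set S : ℕ := ∑ j, x j with hS
  set C : ℝ := ∏ j, qFactorial q (x j) with hC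
  set T : Fin k → ℝ := fun j => ∏' i : ℕ, (1 - θ j * q ^ i) with hT
  -- Step 1: limit of the q-multinomial
  have h1 : Filter.Tendsto (fun n : ℕ => qMultinomial q (n : ℤ) x) Filter.atTop
      (nhds ((1 / (1 - q)) ^ S / C)) := by
    have hnum : Filter.Tendsto (fun n : ℕ => qFacOrd q (n : ℤ) S) Filter.atTop
        (nhds ((1 / (1 - q)) ^ S)) := by
      have : Filter.Tendsto
          (fun n : ℕ => ∏ i ∈ Finset.range S, qNum q ((n : ℤ) - (i : ℤ)))
          Filter.atTop (nhds (∏ _i ∈ Finset.range S, 1 / (1 - q))) := by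
        apply tendsto_finset_prod
        intro i _
        have heq : ∀ n : ℕ, qNum q ((n : ℤ) - (i : ℤ)) = (1 - q ^ n / q ^ i) / (1 - q) := by
          intro n
          unfold qNum
          rw [zpow_sub₀ hq0.ne', zpow_natCast, zpow_natCast]
        simp only [heq]
        have : Filter.Tendsto (fun n : ℕ => (1 - q ^ n / q ^ i) / (1 - q))
            Filter.atTop (nhds ((1 - 0 / q ^ i) / (1 - q))) := by
          apply Filter.Tendsto.div_const
          apply Filter.Tendsto.const_sub
          exact (tendsto_pow_atTop_nhds_zero_of_lt_one hq0.le hq1).div_const _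
        simpa using this
      simpa [Finset.prod_const, qFacOrd] using this
    have := hnum.div_const C
    exact this
  -- Step 2: limit of each truncated product
  have h2 : ∀ j : Fin k, Filter.Tendsto
      (fun n : ℕ => ∏ i ∈ Finset.range
          (n - ∑ i' ∈ Finset.univ.filter (fun i' => i' ≤ j), x i'),
        (1 - θ j * q ^ i)) Filter.atTop (nhds (T j)) := by
    intro j
    exact ((aux_mult q (θ j) hq0 hq1 (hθ0 j) (hθ1 j)).hasProd.tendsto_prod_nat).comp
      (Filter.tendsto_sub_atTop_nat _)
  -- combine
  have h3 : Filter.Tendsto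
      (fun n : ℕ =>
        qMultinomial q (n : ℤ) x *
          ∏ j : Fin k,
            θ j ^ x j *
              ∏ i ∈ Finset.range
                  (n - ∑ i' ∈ Finset.univ.filter (fun i' => i' ≤ j), x i'),
                (1 - θ j * q ^ i))
      Filter.atTop
      (nhds (((1 / (1 - q)) ^ S / C) * ∏ j : Fin k, θ j ^ x j * T j)) := by
    apply h1.mul
    apply tendsto_finset_prod
    intro j _
    exact (h2 j).const_mul _
  convert h3 using 2
  have hden : ∏ j : Fin k, ((1 - q) ^ (x j) * qFactorial q (x j)) = (1 - q) ^ S * C := by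
    rw [Finset.prod_mul_distrib, Finset.prod_pow_eq_pow_sum, ← hS, ← hC]
  rw [Finset.prod_div_distrib, hden, one_div, inv_pow, div_eq_mul_inv, div_eq_mul_inv, mul_inv]
  ring
end
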